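/- Let K, L ∈ B(H) and suppose {Λ_ω}_{ω∈Ω} is both an integral K-operator frame (with bounds A, B) and an integral L-operator frame (with bounds C, D) for B(H), and let a, b be nonzero scalars. Then {Λ_ω}_{ω∈Ω} is an integral (aK + bL)-operator frame for B(H) with lower bound AC/(√C|a| + √A|b|)² and upper bound (B+D)/2. -/

import Mathlib

open MeasureTheory ContinuousLinearMap

theorem stmt_5 {H : Type*} [NormedAddCommGroup H] [InnerProductSpace ℂ H] [CompleteSpace H]
    {Ω : Type*} [MeasurableSpace Ω] (μ : Measure Ω)
    (Λ : Ω → H →L[ℂ] H) (K L : H →L[ℂ] H) (A B C D : ℝ)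
    (hA : 0 < A) (hB : 0 < B) (hC : 0 < C) (hD : 0 < D)
    (hKlow : ∀ x : H, A * ‖adjoint K x‖ ^ 2 ≤ ∫ ω, ‖Λ ω x‖ ^ 2 ∂μ)
    (hKupp : ∀ x : H, ∫ ω, ‖Λ ω x‖ ^ 2 ∂μ ≤ B * ‖x‖ ^ 2)
    (hLlow : ∀ x : H, C * ‖adjoint L x‖ ^ 2 ≤ ∫ ω, ‖Λ ω x‖ ^ 2 ∂μ)
    (hLupp : ∀ x : H, ∫ ω, ‖Λ ω x‖ ^ 2 ∂μ ≤ D * ‖x‖ ^ 2)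
    (a b : ℂ) (ha : a ≠ 0) (hb : b ≠ 0) :
    ∀ x : H,
      A * C / (Real.sqrt C * ‖a‖ + Real.sqrt A * ‖b‖) ^ 2 *
          ‖adjoint (a • K + b • L) x‖ ^ 2 ≤ ∫ ω, ‖Λ ω x‖ ^ 2 ∂μ ∧
      ∫ ω, ‖Λ ω x‖ ^ 2 ∂μ ≤ (B + D) / 2 * ‖x‖ ^ 2 := by
  intro x
  set I : ℝ := ∫ ω, ‖Λ ω x‖ ^ 2 ∂μ with hIdef
  set u : ℝ := ‖adjoint K x‖ with hu
  set v : ℝ := ‖adjoint L x‖ with hv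
  have hu0 : 0 ≤ u := norm_nonneg _
  have hv0 : 0 ≤ v := norm_nonneg _
  have hI0 : 0 ≤ I := le_trans (by positivity) (hKlow x)
  have hAI : A * u ^ 2 ≤ I := hKlow x
  have hCI : C * v ^ 2 ≤ I := hLlow x
  set sA := Real.sqrt A
  set sC := Real.sqrt C
  set sI := Real.sqrt I
  have hsA : 0 < sA := Real.sqrt_pos.2 hA
  have hsC : 0 < sC := Real.sqrt_pos.2 hC
  have hsI : 0 ≤ sI := Real.sqrt_nonneg _
  have hsA2 : sA ^ 2 = A := Real.sq_sqrt hA.le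
  have hsC2 : sC ^ 2 = C := Real.sq_sqrt hC.le
  have hsI2 : sI ^ 2 = I := Real.sq_sqrt hI0
  have hAu : sA * u ≤ sI := by
    have h1 : Real.sqrt (A * u ^ 2) ≤ sI := Real.sqrt_le_sqrt hAI
    rwa [Real.sqrt_mul hA.le, Real.sqrt_sq hu0] at h1
  have hCv : sC * v ≤ sI := by
    have h1 : Real.sqrt (C * v ^ 2) ≤ sI := Real.sqrt_le_sqrt hCI
    rwa [Real.sqrt_mul hC.le, Real.sqrt_sq hv0] at h1
  have ha0 : 0 < ‖a‖ := norm_pos_iff.2 ha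
  have hb0 : 0 < ‖b‖ := norm_pos_iff.2 hb
  have hden : 0 < sC * ‖a‖ + sA * ‖b‖ := by positivity
  constructor
  · -- lower bound
    have hadj : adjoint (a • K + b • L) x
        = (starRingEnd ℂ a) • adjoint K x + (starRingEnd ℂ b) • adjoint L x := by
      simp [map_add, map_smulₛₗ]
    have ht : ‖adjoint (a • K + b • L) x‖ ≤ ‖a‖ * u + ‖b‖ * v := by
      rw [hadj]
      calc ‖(starRingEnd ℂ a) • adjoint K x + (starRingEnd ℂ b) • adjoint L x‖
          ≤ ‖(starRingEnd ℂ a) • adjoint K x‖ + ‖(starRingEnd ℂ b) • adjoint L x‖ :=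
            norm_add_le _ _
        _ = ‖a‖ * u + ‖b‖ * v := by simp [norm_smul, hu, hv]
    set t := ‖adjoint (a • K + b • L) x‖ with htdef
    have ht0 : 0 ≤ t := norm_nonneg _
    have key : A * C * (‖a‖ * u + ‖b‖ * v) ^ 2 ≤ (sC * ‖a‖ + sA * ‖b‖) ^ 2 * I := by
      have h1 : sA * sC * (‖a‖ * u + ‖b‖ * v) ≤ (sC * ‖a‖ + sA * ‖b‖) * sI := by
        have := mul_le_mul_of_nonneg_left hAu (mul_nonneg hsC.le ha0.le)
        have := mul_le_mul_of_nonneg_left hCv (mul_nonneg hsA.le hb0.le)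
        nlinarith
      calc A * C * (‖a‖ * u + ‖b‖ * v) ^ 2
          = (sA * sC * (‖a‖ * u + ‖b‖ * v)) ^ 2 := by
            rw [mul_pow, mul_pow, hsA2, hsC2]
        _ ≤ ((sC * ‖a‖ + sA * ‖b‖) * sI) ^ 2 := by
            apply pow_le_pow_left₀ (by positivity) h1
        _ = (sC * ‖a‖ + sA * ‖b‖) ^ 2 * I := by rw [mul_pow, hsI2]
    rw [div_mul_eq_mul_div, div_le_iff₀ (by positivity)]
    calc A * C * t ^ 2 ≤ A * C * (‖a‖ * u + ‖b‖ * v) ^ 2 := by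
          apply mul_le_mul_of_nonneg_left _ (by positivity)
          exact pow_le_pow_left₀ ht0 ht 2
      _ ≤ (sC * ‖a‖ + sA * ‖b‖) ^ 2 * I := key
      _ = I * (sC * ‖a‖ + sA * ‖b‖) ^ 2 := mul_comm _ _
  · have h1 := hKupp x
    have h2 := hLupp x
    linarith
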